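/- In the 3DM-gadget NTU LP game, if S ⊆ H ∪ T is a blocking coalition against the all-ones utility vector u*, then |S ∩ H| = 3n and |S ∩ T| = n. -/

import Mathlib

open Finset

/-- Membership of a node in a (hyper)edge given as a triple. -/
def memEdge {V : Type*} (h : V) (t : V × V × V) : Prop :=
  h = t.1 ∨ h = t.2.1 ∨ h = t.2.2

instance {V : Type*} [DecidableEq V] (h : V) (t : V × V × V) : Decidable (memEdge h t) := by
  unfold memEdge; infer_instance

/-- The valuations in the 3DM-gadget NTU LP game.  Players are node players
(elements of `Hset`) or edge players (indices `Fin m` of edges `T`); goods are the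
`m` edge goods together with one extra good. -/
noncomputable def gadgetVal {V : Type*} [DecidableEq V] (n m : ℕ)
    (Hset : Finset V) (T : Fin m → V × V × V) :
    ({h : V // h ∈ Hset} ⊕ Fin m) → (Fin m ⊕ Unit) → ℝ
  | Sum.inl h, Sum.inl j =>
      if memEdge h.1 (T j) then 1 / (4 * (n : ℝ) - 1)
      else (1 / (4 * (n : ℝ))) * (1 - 1 / (2 * ((n : ℝ) - 1) * (4 * (n : ℝ) - 1)))
  | Sum.inl _, Sum.inr _ => 1 / (3 * (n : ℝ) + (m : ℝ))
  | Sum.inr e, Sum.inl j => if j = e then (n : ℝ) / (4 * (n : ℝ) - 1) else 0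
  | Sum.inr _, Sum.inr _ => 1 / (3 * (n : ℝ) + (m : ℝ))

/-- A coalition `S` of the 3DM-gadget game blocks the all-ones utility vector `u*`
if some `x ∈ X(S)` (i.e. `x ≥ 0` with `∑ⱼ xⱼ ≤ |S|`) gives every member of `S`
utility strictly greater than `1`. -/
noncomputable def blocksAllOnes {V : Type*} [DecidableEq V] (n m : ℕ)
    (Hset : Finset V) (T : Fin m → V × V × V)
    (S : Finset ({h : V // h ∈ Hset} ⊕ Fin m)) : Prop :=
  ∃ x : Fin m ⊕ Unit → ℝ, (∀ j, 0 ≤ x j) ∧ (∑ j, x j) ≤ (S.card : ℝ) ∧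
    ∀ i ∈ S, (1 : ℝ) < ∑ j, gadgetVal n m Hset T i j * x j

set_option maxHeartbeats 2000000

/-- In the 3DM-gadget NTU LP game, any blocking coalition `S` against the all-ones
utility vector satisfies `|S ∩ H| = 3n` and `|S ∩ T| = n`. -/
theorem gadget_blocking_coalition_cards {V : Type*} [DecidableEq V] (n m : ℕ)
    (hn : 1 < n) (hnm : n ≤ m)
    (hineq : 1 / (3 * (n : ℝ) + (m : ℝ)) <
      (1 / (4 * (n : ℝ))) * (1 - 1 / (2 * ((n : ℝ) - 1) * (4 * (n : ℝ) - 1))))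
    (Xs Ys Zs : Finset V) (hX : Xs.card = n) (hY : Ys.card = n) (hZ : Zs.card = n)
    (hXY : Disjoint Xs Ys) (hXZ : Disjoint Xs Zs) (hYZ : Disjoint Ys Zs)
    (T : Fin m → V × V × V)
    (hT : ∀ e : Fin m, (T e).1 ∈ Xs ∧ (T e).2.1 ∈ Ys ∧ (T e).2.2 ∈ Zs)
    (S : Finset ({h : V // h ∈ Xs ∪ Ys ∪ Zs} ⊕ Fin m))
    (hS : S.Nonempty) (hblock : blocksAllOnes n m (Xs ∪ Ys ∪ Zs) T S) :
    (S.filter (fun p => p.isLeft)).card = 3 * n ∧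
      (S.filter (fun p => p.isRight)).card = n := by
  classical
  obtain ⟨x, hxnn, hxsum, hu⟩ := hblock
  set a := (S.filter (fun p => p.isLeft)).card with hadef
  set b := (S.filter (fun p => p.isRight)).card with hbdef
  -- basic real facts
  have hN2 : (2:ℝ) ≤ (n:ℝ) := by exact_mod_cast hn
  have hMN : (n:ℝ) ≤ (m:ℝ) := by exact_mod_cast hnm
  have hP : (0:ℝ) < 4*(n:ℝ) - 1 := by linarith
  have hQ : (0:ℝ) < 3*(n:ℝ) + (m:ℝ) := by linarith
  have hPQ : 4*(n:ℝ) - 1 ≤ 3*(n:ℝ) + (m:ℝ) := by linarith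
  -- cardinality bookkeeping
  have hab : a + b = S.card := by
    have h : S.filter (fun p => p.isRight) = S.filter (fun p => ¬ p.isLeft) := by
      apply Finset.filter_congr; intro p _; cases p <;> simp
    rw [hadef, hbdef, h, Finset.card_filter_add_card_filter_not]
  have hHcard : (Xs ∪ Ys ∪ Zs).card = 3 * n := by
    rw [Finset.card_union_of_disjoint (Finset.disjoint_union_left.mpr ⟨hXZ, hYZ⟩),
      Finset.card_union_of_disjoint hXY, hX, hY, hZ]
    ring
  have ha3 : a ≤ 3 * n := by
    have hsub : S.filter (fun p => p.isLeft) ⊆ Finset.univ.image Sum.inl := by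
      intro p hp
      rw [Finset.mem_filter] at hp
      rcases p with h | e
      · exact Finset.mem_image.mpr ⟨h, Finset.mem_univ _, rfl⟩
      · simp at hp
    calc a ≤ _ := Finset.card_le_card hsub
    _ ≤ (Finset.univ : Finset {h : V // h ∈ Xs ∪ Ys ∪ Zs}).card := Finset.card_image_le
    _ = (Xs ∪ Ys ∪ Zs).card := by simp
    _ = 3 * n := hHcard
  have hbm : b ≤ m := by
    have hsub : S.filter (fun p => p.isRight) ⊆ Finset.univ.image Sum.inr := by
      intro p hp
      rw [Finset.mem_filter] at hp
      rcases p with h | e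
      · simp at hp
      · exact Finset.mem_image.mpr ⟨e, Finset.mem_univ _, rfl⟩
    calc b ≤ _ := Finset.card_le_card hsub
    _ ≤ (Finset.univ : Finset (Fin m)).card := Finset.card_image_le
    _ = m := by simp
  have ha3R : (a:ℝ) ≤ 3*(n:ℝ) := by exact_mod_cast ha3
  have hbmR : (b:ℝ) ≤ (m:ℝ) := by exact_mod_cast hbm
  have hcap : (a:ℝ) + b ≤ 3*(n:ℝ) + (m:ℝ) := by linarith
  -- the two parts of the consumption
  set s : ℝ := ∑ j : Fin m, x (Sum.inl j) with hsdef
  have hs0 : 0 ≤ s := Finset.sum_nonneg fun j _ => hxnn _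
  have hx00 : 0 ≤ x (Sum.inr ()) := hxnn _
  have hsx : s + x (Sum.inr ()) ≤ (a:ℝ) + b := by
    have h1 : ∑ j, x j = s + x (Sum.inr ()) := by
      rw [Fintype.sum_sum_type]; simp; rfl
    have h2 : ((a + b : ℕ) : ℝ) = (S.card : ℝ) := by rw [hab]
    push_cast at h2
    linarith [hxsum, h1.symm.le, h1.le]
  -- key inequality for node players
  have hα : (1 / (4 * (n:ℝ))) * (1 - 1 / (2 * ((n:ℝ) - 1) * (4 * (n:ℝ) - 1))) ≤ 1 / (4*(n:ℝ) - 1) := by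
    have h1 : (0:ℝ) < 4*(n:ℝ) := by linarith
    have h3 : (0:ℝ) < 2*((n:ℝ)-1)*(4*(n:ℝ)-1) := by nlinarith
    have h4 : 1 - 1 / (2*((n:ℝ)-1)*(4*(n:ℝ)-1)) ≤ 1 := by
      have := one_div_nonneg.mpr h3.le; linarith
    calc (1/(4*(n:ℝ))) * (1 - 1/(2*((n:ℝ)-1)*(4*(n:ℝ)-1))) ≤ (1/(4*(n:ℝ))) * 1 :=
      mul_le_mul_of_nonneg_left h4 (by positivity)
    _ = 1/(4*(n:ℝ)) := mul_one _
    _ ≤ 1/(4*(n:ℝ)-1) := one_div_le_one_div_of_le hP (by linarith)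
  have keyN : ∀ h : {h : V // h ∈ Xs ∪ Ys ∪ Zs}, Sum.inl h ∈ S →
      (4*(n:ℝ)-1) * (3*(n:ℝ)+m) < (3*(n:ℝ)+m) * s + (4*(n:ℝ)-1) * x (Sum.inr ()) := by
    intro h hmem
    have h1 := hu _ hmem
    rw [Fintype.sum_sum_type] at h1
    have h2 : ∑ j : Fin m, gadgetVal n m (Xs ∪ Ys ∪ Zs) T (Sum.inl h) (Sum.inl j) * x (Sum.inl j)
        ≤ (1/(4*(n:ℝ)-1)) * s := by
      rw [hsdef, Finset.mul_sum]
      apply Finset.sum_le_sum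
      intro j _
      have hx := hxnn (Sum.inl j)
      by_cases hmm : memEdge h.1 (T j)
      · simp [gadgetVal, hmm]
      · simp only [gadgetVal, if_neg hmm]
        exact mul_le_mul_of_nonneg_right hα hx
    have h3 : ∑ j : Unit, gadgetVal n m (Xs ∪ Ys ∪ Zs) T (Sum.inl h) (Sum.inr j) * x (Sum.inr j)
        = (1/(3*(n:ℝ)+m)) * x (Sum.inr ()) := by
      simp [gadgetVal]
    rw [h3] at h1
    have h4 : (1:ℝ) < (1/(4*(n:ℝ)-1)) * s + (1/(3*(n:ℝ)+m)) * x (Sum.inr ()) := by linarith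
    have h5 : (1/(4*(n:ℝ)-1)) * s + (1/(3*(n:ℝ)+m)) * x (Sum.inr ())
        = ((3*(n:ℝ)+m) * s + (4*(n:ℝ)-1) * x (Sum.inr ())) / ((4*(n:ℝ)-1)*(3*(n:ℝ)+m)) := by
      field_simp
    rw [h5] at h4
    exact (one_lt_div (mul_pos hP hQ)).mp h4
  -- key inequality for edge players
  have keyE : ∀ e : Fin m, Sum.inr e ∈ S →
      (4*(n:ℝ)-1) * (3*(n:ℝ)+m) < ((n:ℝ) * (3*(n:ℝ)+m)) * x (Sum.inl e) + (4*(n:ℝ)-1) * x (Sum.inr ()) := by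
    intro e hmem
    have h1 := hu _ hmem
    rw [Fintype.sum_sum_type] at h1
    have h2 : ∑ j : Fin m, gadgetVal n m (Xs ∪ Ys ∪ Zs) T (Sum.inr e) (Sum.inl j) * x (Sum.inl j)
        = ((n:ℝ)/(4*(n:ℝ)-1)) * x (Sum.inl e) := by
      simp [gadgetVal, ite_mul]
    have h3 : ∑ j : Unit, gadgetVal n m (Xs ∪ Ys ∪ Zs) T (Sum.inr e) (Sum.inr j) * x (Sum.inr j)
        = (1/(3*(n:ℝ)+m)) * x (Sum.inr ()) := by
      simp [gadgetVal]
    rw [h2, h3] at h1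
    have h5 : ((n:ℝ)/(4*(n:ℝ)-1)) * x (Sum.inl e) + (1/(3*(n:ℝ)+m)) * x (Sum.inr ())
        = (((n:ℝ) * (3*(n:ℝ)+m)) * x (Sum.inl e) + (4*(n:ℝ)-1) * x (Sum.inr ())) / ((4*(n:ℝ)-1)*(3*(n:ℝ)+m)) := by
      rw [eq_div_iff (mul_pos hP hQ).ne']
      field_simp [hP.ne', hQ.ne']
      have hP4 : (n:ℝ)*4 - 1 ≠ 0 := ne_of_gt (by linarith)
      rw [mul_add, mul_div_assoc', mul_div_cancel_left₀ _ hP4]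
    rw [h5] at h1
    exact (one_lt_div (mul_pos hP hQ)).mp h1
  -- a uniform consequence from any player: s > 0
  have huni : (4*(n:ℝ)-1) * (3*(n:ℝ)+m)
      < ((n:ℝ) * (3*(n:ℝ)+m)) * s + (4*(n:ℝ)-1) * x (Sum.inr ()) := by
    obtain ⟨i, hi⟩ := hS
    rcases i with h | e
    · have hk := keyN h hi
      have hprod : (0:ℝ) ≤ (((n:ℝ)-1) * (3*(n:ℝ)+m)) * s :=
        mul_nonneg (mul_nonneg (by linarith) hQ.le) hs0
      linarith [hk, hprod]
    · have hk := keyE e hi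
      have hxe : x (Sum.inl e) ≤ s :=
        Finset.single_le_sum (fun j _ => hxnn (Sum.inl j)) (Finset.mem_univ e)
      have hprod : ((n:ℝ) * (3*(n:ℝ)+m)) * x (Sum.inl e) ≤ ((n:ℝ) * (3*(n:ℝ)+m)) * s :=
        mul_le_mul_of_nonneg_left hxe (by positivity)
      linarith
  have hn0 : (0:ℝ) ≤ (n:ℝ) := by linarith
  have hd : (0:ℝ) < (n:ℝ)*(3*(n:ℝ)+m) - (4*(n:ℝ)-1) := by
    have e1 : (n:ℝ)*(n:ℝ) ≤ (n:ℝ)*(m:ℝ) := mul_le_mul_of_nonneg_left hMN hn0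
    have e2 : (0:ℝ) ≤ (n:ℝ)*((n:ℝ)-2) := mul_nonneg hn0 (by linarith)
    nlinarith [e1, e2]
  have hspos : 0 < s := by
    by_contra hcon
    push_neg at hcon
    have p1 : (0:ℝ) ≤ (4*(n:ℝ)-1) * (((a:ℝ)+b) - s - x (Sum.inr ())) :=
      mul_nonneg hP.le (by linarith)
    have p2 : (0:ℝ) ≤ (4*(n:ℝ)-1) * ((3*(n:ℝ)+m) - ((a:ℝ)+b)) :=
      mul_nonneg hP.le (by linarith)
    have p3 : (0:ℝ) ≤ (-s) * ((n:ℝ)*(3*(n:ℝ)+m) - (4*(n:ℝ)-1)) :=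
      mul_nonneg (by linarith) hd.le
    linarith [huni, p1, p2, p3]
  have hQx0 : 0 < (3*(n:ℝ)+m) - x (Sum.inr ()) := by linarith
  -- the set of edge players
  set E' : Finset (Fin m) := Finset.univ.filter (fun e => Sum.inr e ∈ S) with hE'def
  have hbE : b = E'.card := by
    have himg : S.filter (fun p => p.isRight) = E'.image Sum.inr := by
      ext p
      rcases p with h | e
      · simp [hE'def]
      · simp [hE'def]
    rw [hbdef, himg, Finset.card_image_of_injective _ Sum.inr_injective]
  have hnQ : (0:ℝ) < (n:ℝ) * (3*(n:ℝ)+m) := by positivity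
  have hc : ∀ e ∈ E', ((4*(n:ℝ)-1) * (3*(n:ℝ)+m) - (4*(n:ℝ)-1) * x (Sum.inr ())) / ((n:ℝ)*(3*(n:ℝ)+m))
      ≤ x (Sum.inl e) := by
    intro e he
    rw [div_le_iff₀ hnQ]
    rw [hE'def, Finset.mem_filter] at he
    have := keyE e he.2
    linarith
  have hsum1 : (E'.card : ℝ) * (((4*(n:ℝ)-1) * (3*(n:ℝ)+m) - (4*(n:ℝ)-1) * x (Sum.inr ())) / ((n:ℝ)*(3*(n:ℝ)+m)))
      ≤ ∑ e ∈ E', x (Sum.inl e) := by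
    have := Finset.card_nsmul_le_sum E' (fun e => x (Sum.inl e)) _ hc
    simpa [nsmul_eq_mul] using this
  have hsum2 : ∑ e ∈ E', x (Sum.inl e) ≤ s :=
    Finset.sum_le_sum_of_subset_of_nonneg (Finset.filter_subset _ _) (fun i _ _ => hxnn _)
  have h6 : (b:ℝ) * ((4*(n:ℝ)-1) * (3*(n:ℝ)+m) - (4*(n:ℝ)-1) * x (Sum.inr ()))
      ≤ ((a:ℝ) + b - x (Sum.inr ())) * ((n:ℝ)*(3*(n:ℝ)+m)) := by
    have hb' : (b:ℝ) * (((4*(n:ℝ)-1) * (3*(n:ℝ)+m) - (4*(n:ℝ)-1) * x (Sum.inr ())) / ((n:ℝ)*(3*(n:ℝ)+m)))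
        ≤ (a:ℝ) + b - x (Sum.inr ()) := by
      have hbcast : (b:ℝ) = (E'.card : ℝ) := by exact_mod_cast hbE
      rw [hbcast]
      linarith
    rw [← mul_div_assoc] at hb'
    exact (div_le_iff₀ hnQ).mp hb'
  -- b * (4n-1) ≤ n * (a+b)
  have hbP : (b:ℝ) * (4*(n:ℝ)-1) ≤ (n:ℝ) * ((a:ℝ) + b) := by
    by_contra hcon
    push_neg at hcon
    have h7 : (n:ℝ) * ((a:ℝ)+b) * ((3*(n:ℝ)+m) - x (Sum.inr ()))
        < (b:ℝ) * (4*(n:ℝ)-1) * ((3*(n:ℝ)+m) - x (Sum.inr ())) :=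
      mul_lt_mul_of_pos_right hcon hQx0
    have h8 : (0:ℝ) ≤ (n:ℝ) * x (Sum.inr ()) * ((3*(n:ℝ)+m) - ((a:ℝ)+b)) :=
      mul_nonneg (mul_nonneg (by linarith) hx00) (by linarith)
    linarith [h6, h7, h8]
  -- a ≥ 1 : otherwise contradiction
  have ha1 : 1 ≤ a := by
    by_contra hcon
    push_neg at hcon
    have ha0 : a = 0 := by omega
    have hb1 : 1 ≤ b := by
      have := hS.card_pos
      omega
    have hb1R : (1:ℝ) ≤ (b:ℝ) := by exact_mod_cast hb1
    rw [ha0] at hbP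
    push_cast at hbP
    have hp0 : (0:ℝ) ≤ ((b:ℝ)-1) * (3*(n:ℝ)-1) := mul_nonneg (by linarith) (by linarith)
    linarith [hbP, hp0]
  -- a + b ≥ 4n from a node player
  have h4n : 4 * n ≤ a + b := by
    have haS : (S.filter (fun p => p.isLeft)).Nonempty := by
      rw [← Finset.card_pos]; omega
    obtain ⟨p, hp⟩ := haS
    rw [Finset.mem_filter] at hp
    rcases p with h | e
    · have hk := keyN h hp.1
      have q1 : (3*(n:ℝ)+m) * (s + x (Sum.inr ())) ≤ (3*(n:ℝ)+m) * ((a:ℝ)+b) :=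
        mul_le_mul_of_nonneg_left hsx hQ.le
      have q2 : (4*(n:ℝ)-1) * x (Sum.inr ()) ≤ (3*(n:ℝ)+m) * x (Sum.inr ()) :=
        mul_le_mul_of_nonneg_right hPQ hx00
      have q3 : (4*(n:ℝ)-1) * (3*(n:ℝ)+m) < (3*(n:ℝ)+m) * ((a:ℝ)+b) := by linarith
      have q4 : (4*(n:ℝ)-1) < (a:ℝ)+b := by
        rw [mul_comm] at q3
        exact lt_of_mul_lt_mul_left q3 hQ.le
      have q5 : (4*n : ℕ) < a + b + 1 := by
        have : ((4*n : ℕ) : ℝ) < ((a + b + 1 : ℕ) : ℝ) := by push_cast; linarith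
        exact_mod_cast this
      omega
    · simp at hp
  -- b ≤ n
  have hbn : b ≤ n := by
    by_contra hcon
    push_neg at hcon
    have hb1R : (n:ℝ) + 1 ≤ (b:ℝ) := by exact_mod_cast hcon
    have hp1 : (0:ℝ) ≤ ((b:ℝ) - (n:ℝ) - 1) * (3*(n:ℝ) - 1) :=
      mul_nonneg (by linarith) (by linarith)
    have hp2 : (n:ℝ)*(a:ℝ) ≤ (n:ℝ)*(3*(n:ℝ)) := mul_le_mul_of_nonneg_left ha3R hn0
    linarith [hbP, hp1, hp2]
  omega
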